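/- Let w be a weight on ℝⁿ with the M-good doubling property and let g : ℝⁿ → [0,∞) be a bounded radially decreasing function supported in B(0,κ) whose superlevel sets {g > λ} are balls centered at the origin of radius between r₀ > 0 and κ for all λ ∈ (0, sup g), with r₀, κ ∈ [1/M, M]. Then (1 + 1/M)⁻¹ ‖g‖₁ · w(B(0,1))/|B(0,1)| ≤ (g ∗ w)(0) ≤ (1 + 1/M) ‖g‖₁ · w(B(0,1))/|B(0,1)|. -/

import Mathlib

open MeasureTheory Metric Set Real Filter
noncomputable section

/-- `w` has the `M`-good doubling property: for all `x, R`, all `y ∈ B(x,R)` and all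
`s, r ∈ [R/M, MR]`, `(1+1/M)⁻¹ ≤ [w(B(x,r))/w(B(y,s))]·(sⁿ/rⁿ) ≤ 1+1/M`
(stated in multiplied-out form). -/
def GoodDoubling (n : ℕ) (M : ℝ) (w : EuclideanSpace ℝ (Fin n) → ℝ) : Prop :=
  ∀ (x : EuclideanSpace ℝ (Fin n)) (R : ℝ), 0 < R → ∀ y ∈ Metric.ball x R,
    ∀ r ∈ Set.Icc (R/M) (M*R), ∀ s ∈ Set.Icc (R/M) (M*R),
      (1+1/M)⁻¹ * (∫ z in Metric.ball y s, w z) * r^n ≤ (∫ z in Metric.ball x r, w z) * s^n ∧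
      (∫ z in Metric.ball x r, w z) * s^n ≤ (1+1/M) * (∫ z in Metric.ball y s, w z) * r^n
/-- If `w` is `M`-good doubling and `g ≥ 0` is a bounded radially
decreasing function supported in `B(0,κ)` whose superlevel sets `{g > λ}`, for
`λ ∈ (0, sup g)`, are origin-centered balls of radius in `[r₀,κ]`, with `r₀,κ ∈ [1/M,M]`,
then `(1+1/M)⁻¹ ‖g‖₁ w(B(0,1))/|B(0,1)| ≤ (g ∗ w)(0) ≤ (1+1/M) ‖g‖₁ w(B(0,1))/|B(0,1)|`. -/
theorem layer_cake_good_doubling (n : ℕ) (M r₀ κ : ℝ) (hM : 1 < M)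
    (hr₀ : r₀ ∈ Set.Icc (1/M) M) (hκ : κ ∈ Set.Icc (1/M) M) (hr₀κ : r₀ ≤ κ)
    (w : EuclideanSpace ℝ (Fin n) → ℝ)
    (hw0 : ∀ x, 0 ≤ w x) (hwi : MeasureTheory.LocallyIntegrable w)
    (hgd : GoodDoubling n M w)
    (g : EuclideanSpace ℝ (Fin n) → ℝ)
    (hgb : BddAbove (Set.range g)) (hg0 : ∀ x, 0 ≤ g x)
    (hgrad : ∀ a b : EuclideanSpace ℝ (Fin n), ‖a‖ ≤ ‖b‖ → g b ≤ g a)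
    (hgsupp : Function.support g ⊆ Metric.ball 0 κ)
    (hlevel : ∀ lam : ℝ, 0 < lam → lam < sSup (Set.range g) →
      ∃ ρ ∈ Set.Icc r₀ κ, {z | lam < g z} = Metric.ball (0 : EuclideanSpace ℝ (Fin n)) ρ) :
    (1+1/M)⁻¹ * (∫ z, g z) *
        ((∫ z in Metric.ball (0 : EuclideanSpace ℝ (Fin n)) 1, w z) /
          (MeasureTheory.volume (Metric.ball (0 : EuclideanSpace ℝ (Fin n)) 1)).toReal)
      ≤ (∫ z, g (-z) * w z) ∧
    (∫ z, g (-z) * w z)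
      ≤ (1+1/M) * (∫ z, g z) *
        ((∫ z in Metric.ball (0 : EuclideanSpace ℝ (Fin n)) 1, w z) /
          (MeasureTheory.volume (Metric.ball (0 : EuclideanSpace ℝ (Fin n)) 1)).toReal) := by
  have hM0 : (0:ℝ) < M := lt_trans one_pos hM
  have hMinv : (0:ℝ) < 1/M := by positivity
  have hcM : (0:ℝ) < 1 + 1/M := by positivity
  set S := sSup (Set.range g) with hSdef
  have hgle : ∀ z, g z ≤ S := fun z => le_csSup hgb ⟨z, rfl⟩
  -- g is even (radial)
  have hgneg : ∀ z, g (-z) = g z := fun z =>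
    le_antisymm (hgrad z (-z) (by rw [norm_neg])) (hgrad (-z) z (by rw [norm_neg]))
  simp only [hgneg]
  -- measurability of g
  have hgm : Measurable g := by
    rcases le_or_gt S 0 with hS | hS
    · have hgz : g = fun _ => (0:ℝ) :=
        funext fun z => le_antisymm (le_trans (hgle z) hS) (hg0 z)
      rw [hgz]; exact measurable_const
    · apply measurable_of_Ioi
      intro t
      rcases lt_trichotomy t 0 with ht | ht | ht
      · have : g ⁻¹' Set.Ioi t = Set.univ :=
          Set.eq_univ_of_forall fun z => lt_of_lt_of_le ht (hg0 z)
        rw [this]; exact MeasurableSet.univ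
      · subst ht
        have hU : g ⁻¹' Set.Ioi 0 = ⋃ k : ℕ, {z | S/(k+2) < g z} := by
          ext z
          simp only [Set.mem_preimage, Set.mem_Ioi, Set.mem_iUnion, Set.mem_setOf_eq]
          constructor
          · intro hz
            obtain ⟨k, hk⟩ := exists_nat_gt (S / g z)
            refine ⟨k, ?_⟩
            have h1 : S < k * g z := (div_lt_iff₀ hz).mp hk
            have h2 : S < g z * (k + 2) := by nlinarith
            exact (div_lt_iff₀ (by positivity)).mpr h2
          · rintro ⟨k, hk⟩
            exact lt_of_le_of_lt (div_nonneg hS.le (by positivity)) hk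
        rw [hU]
        apply MeasurableSet.iUnion
        intro k
        have hpos : 0 < S/((k:ℝ)+2) := by positivity
        have hlt : S/((k:ℝ)+2) < S := by
          rw [div_lt_iff₀ (by positivity)]
          nlinarith
        obtain ⟨ρ, _, hball⟩ := hlevel _ hpos hlt
        rw [hball]; exact measurableSet_ball
      · rcases lt_or_ge t S with h | h
        · obtain ⟨ρ, _, hball⟩ := hlevel t ht h
          rw [show g ⁻¹' Set.Ioi t = {z | t < g z} from rfl, hball]
          exact measurableSet_ball
        · have : g ⁻¹' Set.Ioi t = ∅ :=
            Set.eq_empty_iff_forall_notMem.mpr fun z hz =>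
              absurd hz (not_lt.mpr (le_trans (hgle z) h))
          rw [this]; exact MeasurableSet.empty
  -- abbreviations
  set W1 : ℝ := ∫ z in Metric.ball (0 : EuclideanSpace ℝ (Fin n)) 1, w z with hW1
  have hW1nn : 0 ≤ W1 := setIntegral_nonneg measurableSet_ball fun x _ => hw0 x
  set B1 : ℝ := (MeasureTheory.volume (Metric.ball (0 : EuclideanSpace ℝ (Fin n)) 1)).toReal
    with hB1
  have hB1pos : 0 < B1 :=
    ENNReal.toReal_pos (measure_ball_pos volume _ one_pos).ne' measure_ball_lt_top.ne
  set μ : Measure (EuclideanSpace ℝ (Fin n)) :=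
    volume.withDensity (fun z => ENNReal.ofReal (w z)) with hμ
  have hwm : AEMeasurable w volume := hwi.aestronglyMeasurable.aemeasurable
  -- integrability
  have hgint : Integrable g := by
    have hb : Integrable ((Metric.ball (0 : EuclideanSpace ℝ (Fin n)) κ).indicator
        fun _ => S) := by
      rw [integrable_indicator_iff measurableSet_ball]
      exact integrableOn_const measure_ball_lt_top.ne
    refine hb.mono' hgm.aestronglyMeasurable (ae_of_all _ fun z => ?_)
    rw [Real.norm_eq_abs, abs_of_nonneg (hg0 z)]
    by_cases hz : z ∈ Metric.ball (0 : EuclideanSpace ℝ (Fin n)) κ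
    · rw [Set.indicator_of_mem hz]; exact hgle z
    · rw [Set.indicator_of_notMem hz]
      have : g z = 0 := Function.notMem_support.mp fun hs => hz (hgsupp hs)
      rw [this]
  have hwball : ∀ ρ : ℝ, IntegrableOn w (Metric.ball (0 : EuclideanSpace ℝ (Fin n)) ρ) :=
    fun ρ => (hwi.integrableOn_isCompact (isCompact_closedBall 0 ρ)).mono_set
      ball_subset_closedBall
  have hgwint : Integrable (fun z => g z * w z) := by
    have hb : Integrable ((Metric.ball (0 : EuclideanSpace ℝ (Fin n)) κ).indicator
        fun z => S * w z) := by
      rw [integrable_indicator_iff measurableSet_ball]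
      exact (hwball κ).const_mul S
    refine hb.mono' (hgm.aestronglyMeasurable.mul hwi.aestronglyMeasurable)
      (ae_of_all _ fun z => ?_)
    rw [Real.norm_eq_abs, abs_of_nonneg (mul_nonneg (hg0 z) (hw0 z))]
    by_cases hz : z ∈ Metric.ball (0 : EuclideanSpace ℝ (Fin n)) κ
    · rw [Set.indicator_of_mem hz]
      exact mul_le_mul_of_nonneg_right (hgle z) (hw0 z)
    · rw [Set.indicator_of_notMem hz]
      have : g z = 0 := Function.notMem_support.mp fun hs => hz (hgsupp hs)
      rw [this, zero_mul]
  -- layer cake identities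
  have hLg : ENNReal.ofReal (∫ z, g z) = ∫⁻ t in Set.Ioi (0:ℝ), volume {z | t < g z} := by
    rw [ofReal_integral_eq_lintegral_ofReal hgint (ae_of_all _ hg0)]
    exact lintegral_eq_lintegral_meas_lt volume (ae_of_all _ hg0) hgm.aemeasurable
  have hLgw : ENNReal.ofReal (∫ z, g z * w z) = ∫⁻ t in Set.Ioi (0:ℝ), μ {z | t < g z} := by
    rw [ofReal_integral_eq_lintegral_ofReal hgwint
      (ae_of_all _ fun z => mul_nonneg (hg0 z) (hw0 z))]
    have h1 : ∫⁻ z, ENNReal.ofReal (g z) ∂μ = ∫⁻ z, ENNReal.ofReal (g z * w z) := by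
      rw [hμ, lintegral_withDensity_eq_lintegral_mul₀ hwm.ennreal_ofReal
        hgm.aemeasurable.ennreal_ofReal]
      apply lintegral_congr; intro z
      simp only [Pi.mul_apply]
      rw [ENNReal.ofReal_mul (hg0 z), mul_comm]
    rw [← h1]
    exact lintegral_eq_lintegral_meas_lt μ (ae_of_all _ hg0) hgm.aemeasurable
  -- pointwise comparison of the level-set measures
  have key : ∀ t ∈ Set.Ioi (0:ℝ),
      ENNReal.ofReal ((1+1/M)⁻¹ * (W1 / B1)) * volume {z | t < g z} ≤ μ {z | t < g z} ∧
      μ {z | t < g z} ≤ ENNReal.ofReal ((1+1/M) * (W1 / B1)) * volume {z | t < g z} := by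
    intro t ht
    rcases lt_or_ge t S with htS | hts
    · obtain ⟨ρ, hρmem, hball⟩ := hlevel t ht htS
      have hρpos : 0 < ρ := lt_of_lt_of_le (lt_of_lt_of_le hMinv hr₀.1) hρmem.1
      have hμball : μ {z | t < g z} =
          ENNReal.ofReal (∫ z in Metric.ball (0 : EuclideanSpace ℝ (Fin n)) ρ, w z) := by
        rw [hball, hμ, withDensity_apply _ measurableSet_ball,
          ← ofReal_integral_eq_lintegral_ofReal (hwball ρ) (ae_of_all _ hw0)]
      have hvball : volume {z | t < g z} = ENNReal.ofReal (ρ ^ n * B1) := by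
        rw [hball, Measure.addHaar_ball_of_pos _ _ hρpos, finrank_euclideanSpace_fin,
          ENNReal.ofReal_mul (by positivity)]
        congr 1
        rw [hB1, ENNReal.ofReal_toReal measure_ball_lt_top.ne]
      obtain ⟨hlow, hhigh⟩ := hgd 0 1 one_pos 0 (mem_ball_self one_pos) ρ
        ⟨by simpa using le_trans hr₀.1 hρmem.1, by rw [mul_one]; exact le_trans hρmem.2 hκ.2⟩
        1 ⟨by rw [div_le_one hM0]; exact hM.le, by rw [mul_one]; exact hM.le⟩
      rw [one_pow, mul_one] at hlow hhigh
      constructor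
      · rw [hμball, hvball, ← ENNReal.ofReal_mul
          (mul_nonneg (inv_nonneg.mpr hcM.le) (div_nonneg hW1nn hB1pos.le))]
        apply ENNReal.ofReal_le_ofReal
        have heq : (1+1/M)⁻¹ * (W1 / B1) * (ρ ^ n * B1) = (1+1/M)⁻¹ * W1 * ρ ^ n := by
          field_simp
        rw [heq]; exact hlow
      · rw [hμball, hvball, ← ENNReal.ofReal_mul
          (mul_nonneg hcM.le (div_nonneg hW1nn hB1pos.le))]
        apply ENNReal.ofReal_le_ofReal
        have heq : (1+1/M) * (W1 / B1) * (ρ ^ n * B1) = (1+1/M) * W1 * ρ ^ n := by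
          field_simp
        rw [heq]; exact hhigh
    · have hempty : {z | t < g z} = (∅ : Set (EuclideanSpace ℝ (Fin n))) :=
        Set.eq_empty_iff_forall_notMem.mpr fun z hz =>
          absurd hz (not_lt.mpr (le_trans (hgle z) hts))
      rw [hempty]
      simp
  -- integrate the comparison
  have hup : ENNReal.ofReal (∫ z, g z * w z) ≤
      ENNReal.ofReal ((1+1/M) * (W1 / B1)) * ENNReal.ofReal (∫ z, g z) := by
    rw [hLg, hLgw, ← lintegral_const_mul' _ _ ENNReal.ofReal_ne_top]
    refine lintegral_mono_ae ?_
    filter_upwards [ae_restrict_mem measurableSet_Ioi] with t ht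
    exact (key t ht).2
  have hlo : ENNReal.ofReal ((1+1/M)⁻¹ * (W1 / B1)) * ENNReal.ofReal (∫ z, g z) ≤
      ENNReal.ofReal (∫ z, g z * w z) := by
    rw [hLg, hLgw, ← lintegral_const_mul' _ _ ENNReal.ofReal_ne_top]
    refine lintegral_mono_ae ?_
    filter_upwards [ae_restrict_mem measurableSet_Ioi] with t ht
    exact (key t ht).1
  have hgnn : 0 ≤ ∫ z, g z := integral_nonneg hg0
  have hgwnn : 0 ≤ ∫ z, g z * w z :=
    integral_nonneg fun z => mul_nonneg (hg0 z) (hw0 z)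
  constructor
  · rw [← ENNReal.ofReal_mul (mul_nonneg (inv_nonneg.mpr hcM.le)
      (div_nonneg hW1nn hB1pos.le))] at hlo
    have := (ENNReal.ofReal_le_ofReal_iff hgwnn).mp hlo
    nlinarith [this]
  · rw [← ENNReal.ofReal_mul (mul_nonneg hcM.le (div_nonneg hW1nn hB1pos.le))] at hup
    have := (ENNReal.ofReal_le_ofReal_iff
      (mul_nonneg (mul_nonneg hcM.le (div_nonneg hW1nn hB1pos.le)) hgnn)).mp hup
    nlinarith [this]
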